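/- Let (A,B) be a conic transition. If the socle S(A) = A[p] is a cyclic 𝔽_p[T]-module, then the socle S(B) = B[p] is also a cyclic 𝔽_p[T]-module. -/

import Mathlib

/-- A *conic transition* `(A, B)` (Definition 2.4 of the paper): finite abelian
`p`-groups `A`, `B` which are cyclic `ℤ_p[T]`-modules (via commuting endomorphisms
`TA`, `TB` coming from the action of a cyclic `p`-group), with a surjective norm
`N : B → A`, an injective lift `ι : A → B` satisfying `N ∘ ι = p`, a distinguished-type
polynomial `ω ≡ T^d mod p` annihilating `A` with `ι ∘ N = ν(TB)` for
`ν = ((ω+1)^p − 1)/ω = Σ_{i<p} (ω+1)^i`, kernel `ker N = ω·B`, and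
`ω·x = 0 → x ∈ ι(A)`. -/
structure ConicTransition (p : ℕ) (A B : Type*) [AddCommGroup A] [AddCommGroup B] where
  hp : p.Prime
  N : B →+ A
  ι : A →+ B
  TA : AddMonoid.End A
  TB : AddMonoid.End B
  genA : A
  genB : B
  ω : Polynomial ℤ
  d : ℕ
  hNsurj : Function.Surjective N
  hιinj : Function.Injective ι
  hNι : ∀ x : A, N (ι x) = p • x
  hcommN : ∀ x : B, N (TB x) = TA (N x)
  hcommι : ∀ x : A, ι (TA x) = TB (ι x)
  hTAnil : ∃ M : ℕ, TA ^ M = 0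
  hTBnil : ∃ M : ℕ, TB ^ M = 0
  hgen : N genB = genA
  hcycA : ∀ x : A, ∃ f : Polynomial ℤ, x = Polynomial.aeval TA f genA
  hcycB : ∀ x : B, ∃ f : Polynomial ℤ, x = Polynomial.aeval TB f genB
  hωmonic : ω.Monic
  hωdeg : ω.natDegree = d
  hdpos : 0 < d
  hωmodp : ∀ i < d, (p : ℤ) ∣ ω.coeff i
  hω0 : ω.coeff 0 = 0
  hωA : ∀ x : A, Polynomial.aeval TA ω x = 0
  hν : ∀ x : B, ι (N x) =
    Polynomial.aeval TB (∑ i ∈ Finset.range p, (ω + 1) ^ i) x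
  hker : ∀ x : B, N x = 0 ↔ ∃ y : B, x = Polynomial.aeval TB ω y
  hωι : ∀ x : B, Polynomial.aeval TB ω x = 0 → ∃ a : A, x = ι a
  hpA : ∀ x : A, ∃ k : ℕ, p ^ k • x = 0
  hpB : ∀ x : B, ∃ k : ℕ, p ^ k • x = 0


open Module Polynomial

universe u

lemma aux_cyclic (K : Type) [Field K] :
    ∀ (n : ℕ) (V : Type u) [AddCommGroup V] [Module K V] [FiniteDimensional K V],
    finrank K V ≤ n → ∀ (f : V →ₗ[K] V) (M : ℕ), f ^ M = 0 →
    finrank K (LinearMap.ker f) ≤ 1 →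
    ∃ v : V, ∀ x : V, x ∈ Submodule.span K (Set.range fun i : ℕ => (f ^ i) v) := by
  intro n
  induction n with
  | zero =>
    intro V _ _ _ hn f M hM hker
    have : Subsingleton V := finrank_zero_iff.mp (Nat.le_zero.mp hn)
    exact ⟨0, fun x => by rw [Subsingleton.elim x 0]; exact Submodule.zero_mem _⟩
  | succ n ih =>
    intro V _ _ _ hn f M hM hker
    by_cases hV : finrank K V = 0
    · have : Subsingleton V := finrank_zero_iff.mp hV
      exact ⟨0, fun x => by rw [Subsingleton.elim x 0]; exact Submodule.zero_mem _⟩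
    by_cases hker0 : LinearMap.ker f = ⊥
    · exfalso
      have hinj : Function.Injective f := LinearMap.ker_eq_bot.mp hker0
      have hinjM : ∀ k, Function.Injective (⇑(f ^ k)) := by
        intro k
        induction k with
        | zero => rw [pow_zero]; exact Function.injective_id
        | succ k ihk =>
          rw [pow_succ]
          intro a b hab
          simp only [Module.End.mul_apply] at hab
          exact hinj (ihk hab)
      have : Subsingleton V := ⟨fun a b => hinjM M (by rw [hM]; rfl)⟩
      exact hV (finrank_zero_iff.mpr this)
    have hker1 : finrank K (LinearMap.ker f) = 1 := by
      have h0 : finrank K (LinearMap.ker f) ≠ 0 := by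
        intro h
        exact hker0 (Submodule.finrank_eq_zero.mp h)
      omega
    set W := LinearMap.range f with hW
    have hWrank : finrank K W + 1 = finrank K V := by
      rw [← hker1]; exact LinearMap.finrank_range_add_finrank_ker f
    have hWn : finrank K W ≤ n := by omega
    have hWmem : ∀ x ∈ W, f x ∈ W := fun x _ => LinearMap.mem_range_self f x
    set g := f.restrict hWmem with hg
    have hgpow : ∀ (i : ℕ) (x : W), (((g ^ i) x : W) : V) = (f ^ i) (x : V) := by
      intro i
      induction i with
      | zero => intro x; simp
      | succ i ihi =>
        intro x
        rw [pow_succ, pow_succ, Module.End.mul_apply, Module.End.mul_apply, ihi (g x)]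
        rfl
    have hgM : g ^ M = 0 := by
      ext x
      have h := hgpow M x
      rw [hM] at h
      show (((g ^ M) x : W) : V) = _
      simpa using h
    have hgker : finrank K (LinearMap.ker g) ≤ 1 := by
      have hmem : ∀ x : LinearMap.ker g, (W.subtype ∘ₗ (LinearMap.ker g).subtype) x ∈ LinearMap.ker f := by
        intro x
        rw [LinearMap.mem_ker]
        have hx : g x.1 = 0 := x.2
        have h1 : ((g x.1 : W) : V) = f ((x.1 : W) : V) := by
          have := hgpow 1 x.1
          simpa using this
        show f ((x.1 : W) : V) = 0
        rw [← h1, hx]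
        rfl
      have φinj : Function.Injective
          (LinearMap.codRestrict (LinearMap.ker f) (W.subtype ∘ₗ (LinearMap.ker g).subtype) hmem) := by
        intro a b hab
        have h2 := Subtype.ext_iff.mp hab
        simp only [LinearMap.codRestrict_apply, LinearMap.comp_apply,
          Submodule.coe_subtype] at h2
        exact Subtype.ext (Subtype.ext h2)
      calc finrank K (LinearMap.ker g) ≤ finrank K (LinearMap.ker f) :=
        LinearMap.finrank_le_finrank_of_injective φinj
      _ ≤ 1 := hker
    obtain ⟨w, hw⟩ := ih W hWn g M hgM hgker
    obtain ⟨x, hx⟩ : (w : V) ∈ W := w.2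
    set S := Submodule.span K (Set.range fun i : ℕ => (f ^ i) x) with hS
    set S₁ := Submodule.span K (Set.range fun i : ℕ => (f ^ (i + 1)) x) with hS₁
    have hxS : x ∈ S := Submodule.subset_span ⟨0, by simp⟩
    have hWS₁ : W ≤ S₁ := by
      intro y hy
      have hyw := hw ⟨y, hy⟩
      have h2 : y ∈ Submodule.map W.subtype
          (Submodule.span K (Set.range fun i : ℕ => (g ^ i) w)) := ⟨⟨y, hy⟩, hyw, rfl⟩
      rw [Submodule.map_span] at h2
      refine Submodule.span_le.mpr ?_ h2
      rintro z ⟨_, ⟨i, rfl⟩, rfl⟩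
      show (((g ^ i) w : W) : V) ∈ S₁
      have : (((g ^ i) w : W) : V) = (f ^ (i + 1)) x := by
        rw [hgpow i w, ← hx, pow_succ, Module.End.mul_apply]
      rw [this]
      exact Submodule.subset_span ⟨i, rfl⟩
    have hS₁S : S₁ ≤ S := Submodule.span_le.mpr (by rintro z ⟨i, rfl⟩; exact Submodule.subset_span ⟨i + 1, rfl⟩)
    have hWS : W ≤ S := le_trans hWS₁ hS₁S
    by_cases hxW : x ∈ W
    · -- W ≤ map f W, so W = ⊥, so f = 0
      have hSW : S ≤ W := by
        rw [hS, Submodule.span_le]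
        rintro z ⟨i, rfl⟩
        cases i with
        | zero => simpa using hxW
        | succ i =>
          refine ⟨(f ^ i) x, ?_⟩
          show f ((f ^ i) x) = (f ^ (i + 1)) x
          rw [pow_succ']
          rfl
      have h1 : W ≤ Submodule.map f W := by
        refine le_trans hWS₁ (Submodule.span_le.mpr ?_)
        rintro z ⟨i, rfl⟩
        refine ⟨(f ^ i) x, hSW (Submodule.subset_span ⟨i, rfl⟩), ?_⟩
        show f ((f ^ i) x) = (f ^ (i + 1)) x
        rw [pow_succ']
        rfl
      have h2 : ∀ k : ℕ, W ≤ Submodule.map (f ^ k) W := by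
        intro k
        induction k with
        | zero => intro y hy; exact ⟨y, hy, rfl⟩
        | succ k ihk =>
          calc W ≤ Submodule.map f W := h1
          _ ≤ Submodule.map f (Submodule.map (f ^ k) W) := Submodule.map_mono ihk
          _ = Submodule.map (f ^ (k + 1)) W := by
              rw [pow_succ', Module.End.mul_eq_comp, Submodule.map_comp]
      have hW0 : W = ⊥ := by
        have h3 := h2 M
        rw [hM, Submodule.map_zero] at h3
        exact le_bot_iff.mp h3
      have hf0 : f = 0 := LinearMap.range_eq_bot.mp hW0
      have hVle : finrank K V ≤ 1 := by
        rw [← hker1, hf0, LinearMap.ker_zero, finrank_top]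
      obtain ⟨v, hv⟩ := finrank_le_one_iff.mp hVle
      refine ⟨v, fun y => ?_⟩
      obtain ⟨c, hc⟩ := hv y
      rw [← hc]
      exact Submodule.smul_mem _ _ (Submodule.subset_span ⟨0, by simp⟩)
    · have hlt : W < S := lt_of_le_of_ne hWS (fun h => hxW (h ▸ hxS))
      have hfr : finrank K W < finrank K S := Submodule.finrank_lt_finrank_of_lt hlt
      have hStop : finrank K S = finrank K V :=
        le_antisymm (Submodule.finrank_le S) (by omega)
      exact ⟨x, fun y => Submodule.eq_top_iff'.mp (Submodule.eq_top_of_finrank_eq hStop) y⟩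

lemma aux_coprime {A : Type u} [AddCommGroup A] {p : ℕ} (hp : p.Prime) {c : ℤ}
    (hpc : ¬ (p : ℤ) ∣ c) {y : A} (hy : p • y = 0) (h : c • y = 0) : y = 0 := by
  have hpi : Prime (p : ℤ) := Nat.prime_iff_prime_int.mp hp
  have hcop : IsCoprime (p : ℤ) c := (Prime.coprime_iff_not_dvd hpi).mpr hpc
  obtain ⟨u, v, huv⟩ := hcop
  calc y = (1 : ℤ) • y := (one_smul _ _).symm
    _ = (u * (p : ℤ) + v * c) • y := by rw [huv]
    _ = u • ((p : ℤ) • y) + v • (c • y) := by rw [add_smul, mul_smul, mul_smul]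
    _ = 0 := by rw [h, natCast_zsmul, hy]; simp

lemma aux_indep {A : Type u} [AddCommGroup A] {p : ℕ} (hp : p.Prime)
    (TA : AddMonoid.End A) (s : A) (hsi : ∀ i : ℕ, p • ((TA ^ i) s) = 0)
    (m : ℕ) (hm1 : (TA ^ (m + 1)) s = 0) (hm0 : (TA ^ m) s ≠ 0)
    (n : ℕ) (hn : m < n) (c : ℕ → ℤ)
    (hsum : ∑ i ∈ Finset.range n, c i • (TA ^ i) s = 0) :
    ∀ j ≤ m, (p : ℤ) ∣ c j := by
  have htail : ∀ K : ℕ, m + 1 ≤ K → (TA ^ K) s = 0 := by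
    intro K hK
    obtain ⟨t, rfl⟩ := Nat.exists_eq_add_of_le hK
    rw [add_comm, pow_add]
    show (TA ^ t) ((TA ^ (m + 1)) s) = 0
    rw [hm1]
    exact map_zero _
  intro j
  induction j using Nat.strong_induction_on with
  | _ j ihj =>
    intro hjm
    by_contra hpc
    have key : (TA ^ (m - j)) (∑ i ∈ Finset.range n, c i • (TA ^ i) s) = 0 := by
      rw [hsum]; exact map_zero _
    rw [map_sum] at key
    have hterm : ∀ i, (TA ^ (m - j)) (c i • (TA ^ i) s) = c i • (TA ^ ((m - j) + i)) s := by
      intro i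
      rw [map_zsmul]
      congr 1
      rw [pow_add]
      rfl
    rw [Finset.sum_congr rfl (fun i _ => hterm i)] at key
    have hsingle : ∑ i ∈ Finset.range n, c i • (TA ^ ((m - j) + i)) s
        = c j • (TA ^ ((m - j) + j)) s := by
      refine Finset.sum_eq_single_of_mem j (Finset.mem_range.mpr (lt_of_le_of_lt hjm hn)) ?_
      intro i _ hij
      rcases lt_or_gt_of_ne hij with h | h
      · obtain ⟨t, ht⟩ := ihj i h (le_trans h.le hjm)
        rw [ht, mul_comm, mul_smul, natCast_zsmul, hsi]
        simp
      · rw [htail ((m - j) + i) (by omega)]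
        simp
    rw [hsingle] at key
    rw [Nat.sub_add_cancel hjm] at key
    exact hm0 (aux_coprime hp hpc (hsi m) key)

lemma aeval_apply_eq_sum {A : Type u} [AddCommGroup A] (TA : AddMonoid.End A)
    (f : Polynomial ℤ) (s : A) (N : ℕ) (hN : f.natDegree < N) :
    (Polynomial.aeval TA f) s = ∑ i ∈ Finset.range N, f.coeff i • ((TA ^ i) s) := by
  rw [Polynomial.aeval_eq_sum_range' hN]
  erw [AddMonoidHom.finset_sum_apply]
  refine Finset.sum_congr rfl fun i _ => ?_
  show (f.coeff i • (TA ^ i)) s = _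
  rw [Algebra.smul_def, algebraMap_int_eq]
  show ((f.coeff i : AddMonoid.End A)) ((TA ^ i) s) = _
  rw [AddMonoid.End.intCast_apply]

lemma aux_kerA {A : Type u} [AddCommGroup A] {p : ℕ} (hp : p.Prime)
    (TA : AddMonoid.End A) (hnil : ∃ M : ℕ, TA ^ M = 0) (s : A) (hs : p • s = 0)
    (hSA : ∀ x : A, p • x = 0 → ∃ f : Polynomial ℤ, x = Polynomial.aeval TA f s) :
    ∃ e : A, p • e = 0 ∧ ∀ x : A, p • x = 0 → TA x = 0 → ∃ c : ℤ, x = c • e := by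
  classical
  obtain ⟨M, hM⟩ := hnil
  have hsi : ∀ i : ℕ, p • ((TA ^ i) s) = 0 := by
    intro i
    rw [← map_nsmul (TA ^ i), hs]
    exact map_zero _
  by_cases hs0 : s = 0
  · refine ⟨0, smul_zero p, fun x hx _ => ⟨0, ?_⟩⟩
    obtain ⟨f, hf⟩ := hSA x hx
    rw [hf, hs0]
    simp
  · have hex : ∃ k : ℕ, (TA ^ k) s = 0 := ⟨M, by rw [hM]; rfl⟩
    set k := Nat.find hex with hkdef
    have hk0 : k ≠ 0 := by
      intro h
      apply hs0
      have := Nat.find_spec hex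
      rw [← hkdef, h] at this
      simpa using this
    set m := k - 1 with hmdef
    have hm1 : (TA ^ (m + 1)) s = 0 := by
      have : m + 1 = k := by omega
      rw [this, hkdef]
      exact Nat.find_spec hex
    have hm0 : (TA ^ m) s ≠ 0 := Nat.find_min hex (by omega)
    have htail : ∀ K : ℕ, m + 1 ≤ K → (TA ^ K) s = 0 := by
      intro K hK
      obtain ⟨t, rfl⟩ := Nat.exists_eq_add_of_le hK
      rw [add_comm, pow_add]
      show (TA ^ t) ((TA ^ (m + 1)) s) = 0
      rw [hm1]
      exact map_zero _
    refine ⟨(TA ^ m) s, hsi m, fun x hx hTx => ?_⟩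
    obtain ⟨f, hf⟩ := hSA x hx
    set N := m + 1 + (f.natDegree + 1) with hNdef
    have hxs : x = ∑ i ∈ Finset.range N, f.coeff i • ((TA ^ i) s) := by
      rw [hf]
      exact aeval_apply_eq_sum TA f s N (by omega)
    -- divisibility of low coefficients
    have hdvd : ∀ i < m, (p : ℤ) ∣ f.coeff i := by
      intro i him
      have hmm : 1 ≤ m := by omega
      have hsum' : ∑ i ∈ Finset.range N, f.coeff i • ((TA ^ i) (TA s)) = 0 := by
        have : ∀ i : ℕ, (TA ^ i) (TA s) = (TA ^ (i + 1)) s := by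
          intro i
          rw [pow_succ]
          rfl
        rw [Finset.sum_congr rfl fun i _ => by rw [this i]]
        have happ : TA x = TA (∑ i ∈ Finset.range N, f.coeff i • ((TA ^ i) s)) := by rw [← hxs]
        rw [hTx] at happ
        rw [map_sum] at happ
        have : ∀ i : ℕ, TA (f.coeff i • ((TA ^ i) s)) = f.coeff i • ((TA ^ (i + 1)) s) := by
          intro i
          rw [map_zsmul]
          congr 1
          rw [pow_succ']
          rfl
        rw [Finset.sum_congr rfl fun i _ => this i] at happ
        exact happ.symm
      refine aux_indep hp TA (TA s) (fun i => by
          have := hsi (i + 1)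
          rw [pow_succ] at this
          exact this) (m - 1) ?_ ?_ N (by omega) _ hsum' i (by omega)
      · have h5 : ∀ i : ℕ, (TA ^ i) (TA s) = (TA ^ (i + 1)) s := fun i => by rw [pow_succ]; rfl
        rw [h5, Nat.sub_add_cancel hmm, hm1]
      · have hmeq : m - 1 + 1 = m := by omega
        have h6 : (TA ^ (m - 1)) (TA s) = (TA ^ m) s := by
          conv_rhs => rw [← hmeq, pow_succ]
          rfl
        rw [h6]
        exact hm0
    -- assemble
    have hsingle : ∑ i ∈ Finset.range N, f.coeff i • ((TA ^ i) s) = f.coeff m • ((TA ^ m) s) := by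
      refine Finset.sum_eq_single_of_mem m (Finset.mem_range.mpr (by omega)) ?_
      intro i _ him
      rcases lt_or_gt_of_ne him with h | h
      · obtain ⟨t, ht⟩ := hdvd i h
        rw [ht, mul_comm, mul_smul, natCast_zsmul, hsi]
        simp
      · rw [htail i (by omega)]
        simp
    exact ⟨f.coeff m, by rw [hxs, hsingle]⟩

/-- In a conic transition `(A, B)`, if the socle `S(A) = A[p]` is a cyclic
`𝔽_p[T]`-module, then so is the socle `S(B) = B[p]`. -/
theorem stmt_11 (p : ℕ) (A B : Type*) [AddCommGroup A] [AddCommGroup B]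
    [Fintype A] [Fintype B] (ct : ConicTransition p A B)
    (s : A) (hs : p • s = 0)
    (hSA : ∀ x : A, p • x = 0 → ∃ f : Polynomial ℤ, x = Polynomial.aeval ct.TA f s) :
    ∃ s' : B, p • s' = 0 ∧
      ∀ x : B, p • x = 0 → ∃ f : Polynomial ℤ, x = Polynomial.aeval ct.TB f s' := by
  classical
  haveI : Fact p.Prime := ⟨ct.hp⟩
  obtain ⟨e, hpe, hekey⟩ := aux_kerA ct.hp ct.TA ct.hTAnil s hs hSA
  -- every element of B[p] killed by TB is an integer multiple of ι e
  have hkerB : ∀ x : B, p • x = 0 → ct.TB x = 0 → ∃ c : ℤ, x = c • ct.ι e := by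
    intro x hpx hTx
    have hω : Polynomial.aeval ct.TB ct.ω x = 0 := by
      obtain ⟨q, hq⟩ := (Polynomial.X_dvd_iff).mpr ct.hω0
      rw [hq, mul_comm, map_mul, Polynomial.aeval_X]
      show (Polynomial.aeval ct.TB q) (ct.TB x) = 0
      rw [hTx]
      exact map_zero _
    obtain ⟨a, rfl⟩ := ct.hωι x hω
    have hpa : p • a = 0 := ct.hιinj (by rw [AddMonoidHom.map_nsmul, hpx, map_zero])
    have hTa : ct.TA a = 0 := ct.hιinj (by rw [ct.hcommι, hTx, map_zero])
    obtain ⟨c, hc⟩ := hekey a hpa hTa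
    exact ⟨c, by rw [hc, map_zsmul]⟩
  -- the socle of B as a ZMod p vector space
  let V : AddSubgroup B :=
    { carrier := {x : B | p • x = 0}
      add_mem' := fun {a b} ha hb => by
        simp only [Set.mem_setOf_eq] at *
        rw [smul_add, ha, hb, add_zero]
      zero_mem' := by simp
      neg_mem' := fun {a} ha => by
        simp only [Set.mem_setOf_eq] at *
        simp [ha] }
  have hV : ∀ x : ↥V, p • x = 0 := fun x => Subtype.ext (by
    have hx : p • (x : B) = 0 := x.2
    simpa using hx)
  haveI : Module (ZMod p) ↥V := AddCommGroup.zmodModule hV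
  haveI : FiniteDimensional (ZMod p) ↥V := Module.Finite.of_finite
  -- TB restricted to the socle
  let f0 : ↥V →+ ↥V :=
    { toFun := fun x => ⟨ct.TB x, by
        show p • ct.TB (x : B) = 0
        rw [← map_nsmul ct.TB]
        have hx : p • (x : B) = 0 := x.2
        rw [hx, map_zero]⟩
      map_zero' := Subtype.ext (by simp)
      map_add' := fun a b => Subtype.ext (by simp) }
  let f : ↥V →ₗ[ZMod p] ↥V := AddMonoidHom.toZModLinearMap p f0
  have hfpow : ∀ (i : ℕ) (x : ↥V), (((f ^ i) x : ↥V) : B) = (ct.TB ^ i) (x : B) := by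
    intro i
    induction i with
    | zero => intro x; simp
    | succ i ihi =>
      intro x
      rw [pow_succ, pow_succ, Module.End.mul_apply, ihi (f x)]
      rfl
  obtain ⟨M, hM⟩ := ct.hTBnil
  have hfM : f ^ M = 0 := by
    ext x
    have h := hfpow M x
    rw [hM] at h
    show (((f ^ M) x : ↥V) : B) = _
    simpa using h
  let ev : ↥V := ⟨ct.ι e, by
    show p • ct.ι e = 0
    rw [← AddMonoidHom.map_nsmul, hpe, map_zero]⟩
  have hkerle : LinearMap.ker f ≤ Submodule.span (ZMod p) {ev} := by
    intro x hx
    have hfx : f x = 0 := LinearMap.mem_ker.mp hx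
    have hTx : ct.TB (x : B) = 0 := congrArg Subtype.val hfx
    obtain ⟨c, hc⟩ := hkerB (x : B) x.2 hTx
    rw [Submodule.mem_span_singleton]
    refine ⟨((c : ℤ) : ZMod p), ?_⟩
    rw [Int.cast_smul_eq_zsmul]
    exact Subtype.ext hc.symm
  have hfr : Module.finrank (ZMod p) (LinearMap.ker f) ≤ 1 := by
    rcases eq_or_ne ev 0 with h | h
    · rw [h, Submodule.span_zero_singleton] at hkerle
      have hb : LinearMap.ker f = ⊥ := le_bot_iff.mp hkerle
      rw [hb]
      simp
    · exact le_trans (Submodule.finrank_mono hkerle) (le_of_eq (finrank_span_singleton h))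
  obtain ⟨v, hv⟩ := aux_cyclic (ZMod p) (Module.finrank (ZMod p) ↥V) ↥V le_rfl f M hfM hfr
  have hsm : ∀ (cc : ℤ) (φ : AddMonoid.End B) (y : B), (cc • φ) y = cc • φ y := by
    intro cc φ y
    rw [Algebra.smul_def, algebraMap_int_eq]
    show ((cc : AddMonoid.End B)) (φ y) = _
    rw [AddMonoid.End.intCast_apply]
  refine ⟨(v : B), v.2, fun x hx => ?_⟩
  have hxV := hv ⟨x, hx⟩
  have main : ∀ (y : ↥V), y ∈ Submodule.span (ZMod p) (Set.range fun i : ℕ => (f ^ i) v) →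
      ∃ g : Polynomial ℤ, (y : B) = Polynomial.aeval ct.TB g (v : B) := by
    intro y hy
    induction hy using Submodule.span_induction with
    | mem z hz =>
      obtain ⟨i, rfl⟩ := hz
      refine ⟨Polynomial.X ^ i, ?_⟩
      rw [map_pow, Polynomial.aeval_X]
      exact hfpow i v
    | zero => exact ⟨0, by simp⟩
    | add a b ha hb iha ihb =>
      obtain ⟨g1, h1⟩ := iha
      obtain ⟨g2, h2⟩ := ihb
      refine ⟨g1 + g2, ?_⟩
      rw [map_add]
      show ((a : B) + (b : B)) = _
      rw [h1, h2]
      rfl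
    | smul c z hz ihz =>
      obtain ⟨g, hg⟩ := ihz
      refine ⟨(c.val : ℤ) • g, ?_⟩
      have hcv : ((c.val : ℕ) : ZMod p) = c := by
        rw [ZMod.natCast_val, ZMod.cast_id]
      have h1 : c • z = (c.val : ℕ) • z := by
        conv_lhs => rw [← hcv]
        rw [Nat.cast_smul_eq_nsmul]
      rw [h1]
      have h2 : (((c.val : ℕ) • z : ↥V) : B) = (c.val : ℕ) • (z : B) := rfl
      rw [h2, hg, map_smul, hsm, natCast_zsmul]
  exact main ⟨x, hx⟩ hxV
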